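/- Let 2 ≤ k ≤ n and a = (a₁,…,a_k) ∈ ℂᵏ. Then the set 𝒮(a) = {z ∈ ℂⁿ : z₁ = a₁, …, z_k = a_k and all roots of f_z lie in the closed upper half-plane} is a compact subset of ℂⁿ. -/

import Mathlib

open Polynomial

/-- The monic polynomial `f_z(T) = Tⁿ - z₁T^{n-1} + z₂T^{n-2} - ⋯ + (-1)ⁿ zₙ`. -/
noncomputable def fz {n : ℕ} (z : Fin n → ℂ) : ℂ[X] :=
  X ^ n + ∑ i : Fin n, C ((-1 : ℂ) ^ ((i : ℕ) + 1) * z i) * X ^ (n - ((i : ℕ) + 1))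

namespace Stmt6Aux

/-- The componentwise elementary symmetric map. -/
noncomputable def esymMap {n : ℕ} (x : Fin n → ℂ) : Fin n → ℂ :=
  fun i => (Multiset.map x Finset.univ.val).esymm ((i : ℕ) + 1)

lemma esymMap_eq {n : ℕ} (x : Fin n → ℂ) (i : Fin n) :
    esymMap x i = ∑ t ∈ Finset.univ.powersetCard ((i : ℕ) + 1), ∏ j ∈ t, x j := by
  rw [esymMap, Finset.esymm_map_val]

lemma continuous_esymMap {n : ℕ} : Continuous (esymMap (n := n)) := by
  refine continuous_pi fun i => ?_
  simp only [esymMap_eq]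
  exact continuous_finset_sum _ fun t _ => continuous_finset_prod _ fun j _ => continuous_apply j

lemma coeff_fz {n : ℕ} (z : Fin n → ℂ) (i : Fin n) :
    (fz z).coeff (n - ((i : ℕ) + 1)) = (-1) ^ ((i : ℕ) + 1) * z i := by
  have hin : (i : ℕ) + 1 ≤ n := i.isLt
  rw [fz, coeff_add, coeff_X_pow, if_neg (by omega), finset_sum_coeff, zero_add]
  rw [Finset.sum_eq_single i]
  · rw [coeff_C_mul, coeff_X_pow, if_pos rfl, mul_one]
  · intro j _ hj
    have hjn : (j : ℕ) + 1 ≤ n := j.isLt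
    rw [coeff_C_mul, coeff_X_pow, if_neg, mul_zero]
    intro h
    exact hj (Fin.ext (by omega))
  · simp

lemma coeff_fz_n {n : ℕ} (hn : 1 ≤ n) (z : Fin n → ℂ) : (fz z).coeff n = 1 := by
  rw [fz, coeff_add, coeff_X_pow, if_pos rfl, finset_sum_coeff, Finset.sum_eq_zero, add_zero]
  intro j _
  have hjn : (j : ℕ) + 1 ≤ n := j.isLt
  rw [coeff_C_mul, coeff_X_pow, if_neg (by omega), mul_zero]

lemma degree_fz {n : ℕ} (hn : 1 ≤ n) (z : Fin n → ℂ) : (fz z).degree = n := by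
  rw [fz]
  have hq : (∑ i : Fin n, C ((-1 : ℂ) ^ ((i : ℕ) + 1) * z i) * X ^ (n - ((i : ℕ) + 1))).degree
      < (n : WithBot ℕ) := by
    refine lt_of_le_of_lt (degree_sum_le _ _) ?_
    rw [Finset.sup_lt_iff (by exact_mod_cast WithBot.bot_lt_coe n)]
    intro i _
    refine lt_of_le_of_lt (degree_C_mul_X_pow_le _ _) ?_
    have hin : (i : ℕ) + 1 ≤ n := i.isLt
    exact_mod_cast Nat.sub_lt_of_pos_le (by omega) hin
  rw [degree_add_eq_left_of_degree_lt (by rwa [degree_X_pow]), degree_X_pow]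

lemma natDegree_fz {n : ℕ} (hn : 1 ≤ n) (z : Fin n → ℂ) : (fz z).natDegree = n :=
  natDegree_eq_of_degree_eq_some (degree_fz hn z)

lemma monic_fz {n : ℕ} (hn : 1 ≤ n) (z : Fin n → ℂ) : (fz z).Monic :=
  monic_of_natDegree_le_of_coeff_eq_one n (le_of_eq (natDegree_fz hn z)) (coeff_fz_n hn z)

lemma card_roots_fz {n : ℕ} (hn : 1 ≤ n) (z : Fin n → ℂ) :
    Multiset.card (fz z).roots = n := by
  rw [splits_iff_card_roots.mp (IsAlgClosed.splits (fz z)), natDegree_fz hn z]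

lemma z_eq_esymm_roots {n : ℕ} (hn : 1 ≤ n) (z : Fin n → ℂ) (i : Fin n) :
    z i = (fz z).roots.esymm ((i : ℕ) + 1) := by
  have hin : (i : ℕ) + 1 ≤ n := i.isLt
  have hd := natDegree_fz hn z
  have h := Polynomial.coeff_eq_esymm_roots_of_splits
    (IsAlgClosed.splits (fz z)) (k := n - ((i : ℕ) + 1)) (by omega)
  rw [coeff_fz, (monic_fz hn z).leadingCoeff, one_mul, hd, Nat.sub_sub_self hin] at h
  exact mul_left_cancel₀ (pow_ne_zero _ (neg_ne_zero.mpr one_ne_zero)) h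

lemma esymm_zero' (s : Multiset ℂ) : s.esymm 0 = 1 := by
  simp [Multiset.esymm]

lemma fz_esymMap {n : ℕ} (x : Fin n → ℂ) :
    fz (esymMap x) = (Multiset.map (fun t => X - C t) (Multiset.map x Finset.univ.val)).prod := by
  have hcard : Multiset.card (Multiset.map x Finset.univ.val) = n := by simp
  rw [Multiset.prod_X_sub_X_eq_sum_esymm, hcard, Finset.sum_range_succ']
  simp only [pow_zero, one_mul, esymm_zero', map_one, Nat.sub_zero]
  rw [fz, add_comm]
  congr 1
  rw [← Fin.sum_univ_eq_sum_range
    (fun j => (-1 : ℂ[X]) ^ (j + 1) * (C ((Multiset.map x Finset.univ.val).esymm (j + 1))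
      * X ^ (n - (j + 1))))]
  refine Finset.sum_congr rfl fun j _ => ?_
  rw [esymMap]
  simp only [map_mul, map_pow, map_neg, map_one]
  ring

lemma roots_fz_esymMap {n : ℕ} (x : Fin n → ℂ) :
    (fz (esymMap x)).roots = Multiset.map x Finset.univ.val := by
  rw [fz_esymMap]
  exact roots_multiset_prod_X_sub_C _

lemma exists_fun {α : Type*} {n : ℕ} (s : Multiset α) (h : Multiset.card s = n) :
    ∃ x : Fin n → α, Multiset.map x Finset.univ.val = s := by
  have hl : s.toList.length = n := by rw [Multiset.length_toList, h]
  refine ⟨fun i => s.toList.get (finCongr hl.symm i), ?_⟩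
  rw [Fin.univ_val_map]
  have h1 : List.ofFn (fun i : Fin n => s.toList.get (finCongr hl.symm i)) = s.toList := by
    apply List.ext_get (by simp [hl])
    intro i hi1 hi2
    simp [List.get_ofFn]
    rfl
  rw [h1, Multiset.coe_toList]

lemma esymm_one' (s : Multiset ℂ) : s.esymm 1 = s.sum := by
  rw [Multiset.esymm, Multiset.powersetCard_one, Multiset.map_map]
  simp [Function.comp]

lemma esymm_two (s : Multiset ℂ) : 2 * s.esymm 2 = s.sum ^ 2 - (s.map (· ^ 2)).sum := by
  induction s using Multiset.induction with
  | empty => simp [Multiset.esymm, show Multiset.powersetCard 2 (0 : Multiset ℂ) = 0 from Multiset.powersetCard_zero_right 1]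
  | cons a s ih =>
    have h1 : (a ::ₘ s).esymm 2 = a * s.esymm 1 + s.esymm 2 := by
      rw [Multiset.esymm, Multiset.powersetCard_cons, Multiset.map_add, Multiset.sum_add,
        Multiset.map_map]
      rw [add_comm]
      congr 1
      rw [show (Multiset.prod ∘ Multiset.cons a) = fun t : Multiset ℂ => a * t.prod from
        funext fun t => by simp [Multiset.prod_cons], Multiset.sum_map_mul_left]
      rfl
    rw [h1, esymm_one']
    simp only [Multiset.sum_cons, Multiset.map_cons, Multiset.sum_cons]
    rw [mul_add]
    rw [show 2 * (s.esymm 2) = s.sum ^ 2 - (s.map (· ^ 2)).sum from ih]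
    ring

end Stmt6Aux

open Stmt6Aux in
/-- For `2 ≤ k ≤ n`, the slice `𝒮(a)` of upper half-plane stable monic polynomials whose
first `k` coefficients are fixed by `a` is compact. -/
theorem stmt6 (n k : ℕ) (h2 : 2 ≤ k) (hkn : k ≤ n) (a : Fin k → ℂ) :
    IsCompact {z : Fin n → ℂ |
      (∀ i : Fin k, z (Fin.castLE hkn i) = a i) ∧ ∀ w ∈ (fz z).roots, 0 ≤ w.im} := by
  have hn1 : 1 ≤ n := le_trans (by omega) hkn
  set T : Set (Fin n → ℂ) :=
    {x | (∀ i : Fin k, esymMap x (Fin.castLE hkn i) = a i) ∧ ∀ i, 0 ≤ (x i).im} with hT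
  have key : ∀ x : Fin n → ℂ, ∀ i : Fin n,
      esymMap x i = (Multiset.map x Finset.univ.val).esymm ((i : ℕ) + 1) := fun _ _ => rfl
  have hTset : {z : Fin n → ℂ |
      (∀ i : Fin k, z (Fin.castLE hkn i) = a i) ∧ ∀ w ∈ (fz z).roots, 0 ≤ w.im}
      = esymMap '' T := by
    ext z
    constructor
    · rintro ⟨hz1, hz2⟩
      obtain ⟨x, hx⟩ := exists_fun (fz z).roots (card_roots_fz hn1 z)
      have hzx : esymMap x = z := by
        funext i
        rw [key, hx, ← z_eq_esymm_roots hn1 z i]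
      refine ⟨x, ⟨fun i => by rw [hzx]; exact hz1 i, fun i => ?_⟩, hzx⟩
      refine hz2 (x i) ?_
      rw [← hx]
      exact Multiset.mem_map_of_mem x (Finset.mem_univ i)
    · rintro ⟨x, ⟨hx1, hx2⟩, rfl⟩
      refine ⟨hx1, fun w hw => ?_⟩
      rw [roots_fz_esymMap] at hw
      obtain ⟨i, _, rfl⟩ := Multiset.mem_map.mp hw
      exact hx2 i
  rw [hTset]
  refine IsCompact.image ?_ continuous_esymMap
  apply Metric.isCompact_of_isClosed_isBounded
  · have : T = (⋂ i : Fin k, {x : Fin n → ℂ | esymMap x (Fin.castLE hkn i) = a i})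
        ∩ ⋂ i : Fin n, {x : Fin n → ℂ | 0 ≤ (x i).im} := by
      ext x
      simp [hT, Set.mem_iInter]
    rw [this]
    refine IsClosed.inter (isClosed_iInter fun i => ?_) (isClosed_iInter fun i => ?_)
    · exact isClosed_eq ((continuous_apply _).comp continuous_esymMap) continuous_const
    · exact isClosed_le continuous_const (Complex.continuous_im.comp (continuous_apply i))
  · set c : ℂ := a ⟨0, by omega⟩ with hc
    set b : ℂ := a ⟨1, by omega⟩ with hb
    set M : ℝ := max 0 ((c ^ 2 - 2 * b).re + 2 * c.im ^ 2) with hM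
    rw [isBounded_iff_forall_norm_le]
    refine ⟨Real.sqrt M, fun x hx => ?_⟩
    obtain ⟨hx1, hx2⟩ := hx
    have hsum : ∑ i, x i = c := by
      have h0 := hx1 ⟨0, by omega⟩
      rw [key] at h0
      calc ∑ i, x i = (Multiset.map x Finset.univ.val).esymm 1 := (esymm_one' _).symm
        _ = c := h0
    have hsq : ∑ i, (x i) ^ 2 = c ^ 2 - 2 * b := by
      have h := hx1 ⟨1, by omega⟩
      rw [key] at h
      have h2 := esymm_two (Multiset.map x Finset.univ.val)
      rw [Multiset.map_map] at h2
      have hsum' : (Multiset.map x Finset.univ.val).sum = ∑ i, x i := rfl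
      have hsq' : (Multiset.map ((· ^ 2) ∘ x) Finset.univ.val).sum = ∑ i, (x i) ^ 2 := rfl
      rw [hsum', hsq', hsum,
        show (Multiset.map x Finset.univ.val).esymm 2 = b from h] at h2
      linear_combination h2
    -- real and imaginary bookkeeping
    have him : ∑ i, (x i).im = c.im := by
      rw [← hsum, Complex.im_sum]
    have himsq : ∑ i, (x i).im ^ 2 ≤ c.im ^ 2 := by
      rw [← him]
      exact Finset.sum_sq_le_sq_sum_of_nonneg fun i _ => hx2 i
    have hre : ∑ i, ((x i).re ^ 2 - (x i).im ^ 2) = (c ^ 2 - 2 * b).re := by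
      rw [← hsq, Complex.re_sum]
      refine Finset.sum_congr rfl fun i _ => ?_
      rw [sq (x i), Complex.mul_re]
      ring
    rw [pi_norm_le_iff_of_nonneg (Real.sqrt_nonneg _)]
    intro j
    have hj2 : ‖x j‖ ^ 2 ≤ M := by
      have h1 : ‖x j‖ ^ 2 = (x j).re ^ 2 + (x j).im ^ 2 := by
        rw [Complex.sq_norm, Complex.normSq_apply]
        ring
      have h2 : (x j).re ^ 2 + (x j).im ^ 2
          ≤ (∑ i, (x i).re ^ 2) + ∑ i, (x i).im ^ 2 := by
        gcongr
        · exact Finset.single_le_sum (f := fun i => (x i).re ^ 2)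
            (fun i _ => sq_nonneg _) (Finset.mem_univ j)
        · exact Finset.single_le_sum (f := fun i => (x i).im ^ 2)
            (fun i _ => sq_nonneg _) (Finset.mem_univ j)
      have h3 : (∑ i, (x i).re ^ 2) + ∑ i, (x i).im ^ 2
          = (c ^ 2 - 2 * b).re + 2 * ∑ i, (x i).im ^ 2 := by
        rw [← hre, Finset.sum_sub_distrib]
        ring
      have h4 : (c ^ 2 - 2 * b).re + 2 * ∑ i, (x i).im ^ 2 ≤ M := by
        rw [hM]
        exact le_max_of_le_right (by linarith [himsq])
      rw [h1]
      exact le_trans h2 (le_trans (le_of_eq h3) h4)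
    have : ‖x j‖ = Real.sqrt (‖x j‖ ^ 2) := (Real.sqrt_sq (norm_nonneg _)).symm
    rw [this]
    exact Real.sqrt_le_sqrt hj2
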